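/- arXiv:2003.12935 — 3 statements merged into one kernel-verified Lean document; each statement's English description precedes it below -/
import Mathlib

section
/- Let A ∈ R^{κ×κ} be symmetric positive definite. Then θ_1[A] := max{θ ≥ 0 : gᵀAg ≥ θ‖g‖₁² for all g ∈ R^κ} satisfies θ_1[A] = (max_{‖x‖_∞ ≤ 1} xᵀA⁻¹x)⁻¹. -/
open Matrix

lemma symm_dot' {n : ℕ} {M : Matrix (Fin n) (Fin n) ℝ} (hM : M.IsSymm) (u v : Fin n → ℝ) :
    u ⬝ᵥ M.mulVec v = v ⬝ᵥ M.mulVec u := by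
  rw [dotProduct_mulVec, ← mulVec_transpose, hM.eq, dotProduct_comm]

lemma cs_form' {n : ℕ} {M : Matrix (Fin n) (Fin n) ℝ} (hM : M.IsSymm) (hPD : M.PosDef)
    (u v : Fin n → ℝ) :
    (u ⬝ᵥ M.mulVec v) ^ 2 ≤ (u ⬝ᵥ M.mulVec u) * (v ⬝ᵥ M.mulVec v) := by
  by_cases hv : v = 0
  · simp [hv]
  have hc : 0 < v ⬝ᵥ M.mulVec v := by simpa using hPD.dotProduct_mulVec_pos hv
  set a := u ⬝ᵥ M.mulVec u with ha
  set b := u ⬝ᵥ M.mulVec v with hb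
  set c := v ⬝ᵥ M.mulVec v with hc'
  have hkey : 0 ≤ (c • u + (-b) • v) ⬝ᵥ M.mulVec (c • u + (-b) • v) := by
    have := hPD.posSemidef.dotProduct_mulVec_nonneg (c • u + (-b) • v)
    simpa using this
  have hexp : (c • u + (-b) • v) ⬝ᵥ M.mulVec (c • u + (-b) • v)
      = c^2 * a - 2*c*b*b + b^2 * c := by
    rw [mulVec_add, mulVec_smul, mulVec_smul, dotProduct_add, add_dotProduct,
      add_dotProduct, dotProduct_smul, dotProduct_smul, dotProduct_smul, dotProduct_smul,
      smul_dotProduct, smul_dotProduct, smul_dotProduct, smul_dotProduct]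
    have h1 : v ⬝ᵥ M.mulVec u = b := (symm_dot' hM v u).trans rfl
    simp only [smul_eq_mul, h1, ← ha, ← hb, ← hc']
    ring
  rw [hexp] at hkey
  nlinarith [hc, sq_nonneg b]

/-- For symmetric positive definite A,
θ_1[A] = (max over the unit ℓ_∞ ball of xᵀA⁻¹x)⁻¹. -/
theorem theta_one_eq_inv_max {κ : ℕ}
    (A : Matrix (Fin κ) (Fin κ) ℝ) (hA : A.IsSymm) (hPD : A.PosDef)
    (θ1 m : ℝ)
    (hθ1 : IsGreatest {θ : ℝ | 0 ≤ θ ∧ ∀ g : Fin κ → ℝ,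
      θ * (∑ i, |g i|) ^ 2 ≤ g ⬝ᵥ A.mulVec g} θ1)
    (hm : IsGreatest {v : ℝ | ∃ x : Fin κ → ℝ, ‖x‖ ≤ 1 ∧ v = x ⬝ᵥ A⁻¹.mulVec x} m) :
    θ1 = m⁻¹ := by
  rcases Nat.eq_zero_or_pos κ with hκ | hκ
  · -- κ = 0 : the θ-set is [0,∞), no greatest element, contradiction
    exfalso
    have hθ0 : 0 ≤ θ1 := hθ1.1.1
    have hmem : θ1 + 1 ∈ {θ : ℝ | 0 ≤ θ ∧ ∀ g : Fin κ → ℝ,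
        θ * (∑ i, |g i|) ^ 2 ≤ g ⬝ᵥ A.mulVec g} := by
      refine ⟨by linarith, fun g => ?_⟩
      subst hκ
      simp [dotProduct]
    have := hθ1.2 hmem
    linarith
  -- basic facts
  have hAinvS : A⁻¹.IsSymm := by
    unfold Matrix.IsSymm
    rw [transpose_nonsing_inv, hA.eq]
  have hAinvPD : A⁻¹.PosDef := hPD.inv
  have hmul : A * A⁻¹ = 1 := mul_nonsing_inv A hPD.det_pos.ne'.isUnit
  have hmul' : A⁻¹ * A = 1 := nonsing_inv_mul A hPD.det_pos.ne'.isUnit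
  -- m > 0
  have hmpos : 0 < m := by
    set e : Fin κ → ℝ := Pi.single ⟨0, hκ⟩ 1 with he
    have hne : e ≠ 0 := by
      intro h
      have := congrFun h ⟨0, hκ⟩
      simp [he] at this
    have hval : 0 < e ⬝ᵥ A⁻¹.mulVec e := by simpa using hAinvPD.dotProduct_mulVec_pos hne
    have hnorm : ‖e‖ ≤ 1 := by
      rw [pi_norm_le_iff_of_nonneg zero_le_one]
      intro i
      rw [he]
      rcases eq_or_ne i ⟨0, hκ⟩ with h | h <;> simp [h, Pi.single_apply]
    have : e ⬝ᵥ A⁻¹.mulVec e ≤ m := hm.2 ⟨e, hnorm, rfl⟩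
    linarith
  have hθ0 : 0 ≤ θ1 := hθ1.1.1
  apply le_antisymm
  · -- θ1 ≤ m⁻¹ : use optimal x, g := A⁻¹ x
    obtain ⟨x, hx1, hxm⟩ := hm.1
    set g : Fin κ → ℝ := A⁻¹.mulVec x with hg
    have hAg : A.mulVec g = x := by
      rw [hg, mulVec_mulVec, hmul, one_mulVec]
    have hgAg : g ⬝ᵥ A.mulVec g = m := by
      rw [hAg, hg, hxm, dotProduct_comm]
    have hsum : m ≤ ∑ i, |g i| := by
      rw [hxm, dotProduct]
      apply Finset.sum_le_sum
      intro i _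
      calc x i * g i ≤ |x i * g i| := le_abs_self _
        _ = |x i| * |g i| := abs_mul _ _
        _ ≤ 1 * |g i| := by
            apply mul_le_mul_of_nonneg_right _ (abs_nonneg _)
            exact le_trans (norm_le_pi_norm x i) hx1
        _ = |g i| := one_mul _
    have hineq : θ1 * (∑ i, |g i|) ^ 2 ≤ m := by rw [← hgAg]; exact hθ1.1.2 g
    have h2 : θ1 * m ^ 2 ≤ m := by
      refine le_trans ?_ hineq
      apply mul_le_mul_of_nonneg_left _ hθ0
      exact pow_le_pow_left₀ hmpos.le hsum 2
    rw [inv_eq_one_div, le_div_iff₀ hmpos]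
    nlinarith
  · -- m⁻¹ ≤ θ1 : show m⁻¹ is in the set
    apply hθ1.2
    refine ⟨inv_nonneg.mpr hmpos.le, fun g => ?_⟩
    set x : Fin κ → ℝ := fun i => if 0 ≤ g i then 1 else -1 with hx
    have hxg : x ⬝ᵥ g = ∑ i, |g i| := by
      rw [dotProduct]
      apply Finset.sum_congr rfl
      intro i _
      rw [hx]
      rcases le_or_gt 0 (g i) with h | h
      · simp [h, abs_of_nonneg h]
      · simp [not_le.mpr h, abs_of_neg h]
    have hxnorm : ‖x‖ ≤ 1 := by
      rw [pi_norm_le_iff_of_nonneg zero_le_one]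
      intro i
      rw [hx]
      rcases le_or_gt 0 (g i) with h | h
      · simp [h]
      · simp [not_le.mpr h]
    have hxm : x ⬝ᵥ A⁻¹.mulVec x ≤ m := hm.2 ⟨x, hxnorm, rfl⟩
    have hgAg : 0 ≤ g ⬝ᵥ A.mulVec g := by simpa using hPD.posSemidef.dotProduct_mulVec_nonneg g
    -- x ⬝ᵥ g = x ⬝ᵥ A⁻¹ (A g)
    have hrw : x ⬝ᵥ g = x ⬝ᵥ A⁻¹.mulVec (A.mulVec g) := by
      rw [mulVec_mulVec, hmul', one_mulVec]
    have hcs := cs_form' hAinvS hAinvPD x (A.mulVec g)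
    have hAA : (A.mulVec g) ⬝ᵥ A⁻¹.mulVec (A.mulVec g) = g ⬝ᵥ A.mulVec g := by
      rw [mulVec_mulVec, hmul', one_mulVec, dotProduct_comm]
    rw [hAA, ← hrw, hxg] at hcs
    have h3 : (∑ i, |g i|) ^ 2 ≤ m * (g ⬝ᵥ A.mulVec g) :=
      le_trans hcs (mul_le_mul_of_nonneg_right hxm hgAg)
    rw [inv_mul_le_iff₀ hmpos]
    linarith
end

section
/- Let (ζ_i)_{i≥1} be a real martingale difference sequence with |ζ_i| ≤ 1 a.s. and conditional variances σ_i² = E[ζ_i² | F_{i−1}]. Set ζ̄_N = (1/N)∑_{i=1}^N ζ_i and s̄_N = (1/N)∑_{i=1}^N σ_i². Suppose for all z > 0 and s > 0, Prob{ |∑_{i=1}^N ζ_i| ≥ √(2zs) + z/3, ∑_i σ_i² ≤ s } ≤ 2e^{−z} (Bernstein inequality for martingales). Then for 0 < s_low < s_high and y > 1, Prob{ |ζ̄_N| ≥ √(2y s̄_N / N) + y/(3N), s_low ≤ s̄_N ≤ s_high } ≤ 2e(y·ln(s_high/s_low) + 1)e^{−y}. -/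
open MeasureTheory Finset

private lemma exists_between_step (f : ℕ → ℝ) (x : ℝ) :
    ∀ J : ℕ, 1 ≤ J → f 0 ≤ x → x ≤ f J →
      ∃ j, 1 ≤ j ∧ j ≤ J ∧ f (j - 1) ≤ x ∧ x ≤ f j := by
  intro J
  induction J with
  | zero => intro h; omega
  | succ J ih =>
    intro _ h0 hJ
    by_cases hx : x ≤ f J
    · rcases Nat.eq_zero_or_pos J with hJ0 | hJpos
      · subst hJ0; exact ⟨1, le_refl 1, le_refl 1, by simpa using h0, hJ⟩
      · obtain ⟨j, hj1, hjJ, hlo, hhi⟩ := ih hJpos h0 hx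
        exact ⟨j, hj1, by omega, hlo, hhi⟩
    · exact ⟨J + 1, by omega, le_refl _, by simpa using le_of_not_ge hx, hJ⟩

/-- Peeling argument: from the Bernstein inequality for martingales one obtains a
variance-adaptive deviation bound on the range s_low ≤ s̄_N ≤ s_high. -/
theorem bernstein_peeling {Ω : Type*} {m0 : MeasurableSpace Ω}
    {μ : Measure Ω} [IsProbabilityMeasure μ]
    (ℱ : Filtration ℕ m0) (N : ℕ) (hN : 0 < N)
    (ζ : ℕ → Ω → ℝ) (σsq : ℕ → Ω → ℝ)
    (hadapted : ∀ i ∈ Finset.Icc 1 N, StronglyMeasurable[ℱ i] (ζ i))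
    (hmds : ∀ i ∈ Finset.Icc 1 N, μ[ζ i | ℱ (i - 1)] =ᵐ[μ] 0)
    (hbdd : ∀ i ∈ Finset.Icc 1 N, ∀ᵐ ω ∂μ, |ζ i ω| ≤ 1)
    (hσ : ∀ i ∈ Finset.Icc 1 N,
      σsq i =ᵐ[μ] μ[fun ω => (ζ i ω) ^ 2 | ℱ (i - 1)])
    (hBernstein : ∀ z > (0 : ℝ), ∀ s > (0 : ℝ),
      μ {ω | Real.sqrt (2 * z * s) + z / 3 ≤ |∑ i ∈ Finset.Icc 1 N, ζ i ω| ∧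
             ∑ i ∈ Finset.Icc 1 N, σsq i ω ≤ s}
        ≤ ENNReal.ofReal (2 * Real.exp (-z)))
    (slow shigh : ℝ) (hslow : 0 < slow) (hrange : slow < shigh)
    (y : ℝ) (hy : 1 < y) :
    μ {ω | Real.sqrt (2 * y * ((1 / (N : ℝ)) * ∑ i ∈ Finset.Icc 1 N, σsq i ω) / N)
            + y / (3 * N)
            ≤ |(1 / (N : ℝ)) * ∑ i ∈ Finset.Icc 1 N, ζ i ω| ∧
           slow ≤ (1 / (N : ℝ)) * ∑ i ∈ Finset.Icc 1 N, σsq i ω ∧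
           (1 / (N : ℝ)) * ∑ i ∈ Finset.Icc 1 N, σsq i ω ≤ shigh}
      ≤ ENNReal.ofReal (2 * Real.exp 1 * (y * Real.log (shigh / slow) + 1)
          * Real.exp (-y)) := by
  have hy0 : (0:ℝ) < y - 1 := by linarith
  have hypos : (0:ℝ) < y := by linarith
  have hNpos : (0:ℝ) < N := by exact_mod_cast hN
  have hshigh : 0 < shigh := hslow.trans hrange
  set L : ℝ := Real.log (shigh / slow) with hLdef
  have hLpos : 0 < L := Real.log_pos (by rw [lt_div_iff₀ hslow]; linarith)
  set r : ℝ := y / (y - 1) with hrdef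
  have hr1 : 1 < r := (one_lt_div hy0).mpr (by linarith)
  have hr0 : 0 < r := lt_trans one_pos hr1
  set J : ℕ := ⌈y * L⌉₊ with hJdef
  have hJ1 : 1 ≤ J := Nat.one_le_ceil_iff.mpr (mul_pos hypos hLpos)
  set sfun : ℕ → ℝ := fun j => N * slow * r ^ j with hsfundef
  have hsfun_pos : ∀ j, 0 < sfun j := fun j =>
    mul_pos (mul_pos hNpos hslow) (pow_pos hr0 j)
  -- log r ≥ 1/y
  have hlogr : 1 / y ≤ Real.log r := by
    have h1 : Real.log ((y-1)/y) ≤ (y-1)/y - 1 :=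
      Real.log_le_sub_one_of_pos (div_pos hy0 hypos)
    have h2 : Real.log r = - Real.log ((y-1)/y) := by
      rw [hrdef, ← Real.log_inv, inv_div]
    have h3 : (y-1)/y - 1 = -(1/y) := by field_simp; ring
    rw [h2]; linarith [h1.trans_eq h3]
  -- coverage
  have hcover : (N:ℝ) * shigh ≤ sfun J := by
    have hrJ : shigh / slow ≤ r ^ J := by
      have hexp : r ^ J = Real.exp (J * Real.log r) := by
        rw [← Real.log_pow, Real.exp_log (pow_pos hr0 J)]
      have h1 : shigh / slow = Real.exp L := (Real.exp_log (div_pos hshigh hslow)).symm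
      rw [h1, hexp]
      apply Real.exp_le_exp.mpr
      have hle : y * L ≤ (J : ℝ) := Nat.le_ceil _
      have h2 : L ≤ (J:ℝ) * (1/y) := by
        calc L = (y * L) * (1/y) := by field_simp
          _ ≤ (J:ℝ) * (1/y) := mul_le_mul_of_nonneg_right hle (by positivity)
      calc L ≤ (J:ℝ) * (1/y) := h2
        _ ≤ (J:ℝ) * Real.log r := by
            apply mul_le_mul_of_nonneg_left hlogr (by positivity)
    calc (N:ℝ) * shigh = (N * slow) * (shigh / slow) := by field_simp
      _ ≤ (N * slow) * r ^ J :=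
          mul_le_mul_of_nonneg_left hrJ (by positivity)
  -- the peeled events
  set A : ℕ → Set Ω := fun j =>
    {ω | Real.sqrt (2 * (y-1) * sfun j) + (y-1) / 3 ≤ |∑ i ∈ Finset.Icc 1 N, ζ i ω| ∧
         ∑ i ∈ Finset.Icc 1 N, σsq i ω ≤ sfun j} with hAdef
  have hsub :
      {ω | Real.sqrt (2 * y * ((1 / (N : ℝ)) * ∑ i ∈ Finset.Icc 1 N, σsq i ω) / N)
            + y / (3 * N)
            ≤ |(1 / (N : ℝ)) * ∑ i ∈ Finset.Icc 1 N, ζ i ω| ∧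
           slow ≤ (1 / (N : ℝ)) * ∑ i ∈ Finset.Icc 1 N, σsq i ω ∧
           (1 / (N : ℝ)) * ∑ i ∈ Finset.Icc 1 N, σsq i ω ≤ shigh}
        ⊆ ⋃ j ∈ Finset.Icc 1 J, A j := by
    intro ω hω
    obtain ⟨h1, h2, h3⟩ := hω
    set S := ∑ i ∈ Finset.Icc 1 N, σsq i ω with hSdef
    set Zv := ∑ i ∈ Finset.Icc 1 N, ζ i ω with hZdef
    rw [one_div_mul_eq_div] at h2 h3
    have hS0 : (N:ℝ) * slow ≤ S := by
      rw [le_div_iff₀ hNpos] at h2; linarith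
    have hSJ : S ≤ sfun J := by
      rw [div_le_iff₀ hNpos] at h3
      calc S ≤ shigh * N := h3
        _ = (N:ℝ) * shigh := by ring
        _ ≤ sfun J := hcover
    obtain ⟨j, hj1, hjJ, hlo, hhi⟩ :=
      exists_between_step sfun S J hJ1 (by simpa [hsfundef] using hS0) hSJ
    refine Set.mem_biUnion (Finset.mem_Icc.mpr ⟨hj1, hjJ⟩) ⟨?_, hhi⟩
    -- main inequality
    have hSpos : 0 < S := lt_of_lt_of_le (by positivity) hS0
    have key : Real.sqrt (2 * y * S) + y / 3 ≤ |Zv| := by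
      have habs : |(1 / (N : ℝ)) * Zv| = |Zv| / N := by
        rw [abs_mul, abs_of_pos (by positivity : (0:ℝ) < 1/(N:ℝ))]
        rw [one_div_mul_eq_div]
      have hsq : Real.sqrt (2 * y * ((1 / (N : ℝ)) * S) / N)
          = Real.sqrt (2 * y * S) / N := by
        rw [show 2 * y * ((1 / (N : ℝ)) * S) / N = (2 * y * S) / (N:ℝ)^2 by ring,
          Real.sqrt_div (by positivity), Real.sqrt_sq hNpos.le]
      rw [habs, hsq] at h1
      have h4 : (Real.sqrt (2 * y * S) + y / 3) / N ≤ |Zv| / N := by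
        rw [add_div]
        calc Real.sqrt (2 * y * S) / N + y / 3 / N
            = Real.sqrt (2 * y * S) / N + y / (3 * N) := by rw [div_div]
          _ ≤ |Zv| / N := h1
      simpa [div_mul_cancel₀, hNpos.ne'] using
        mul_le_mul_of_nonneg_right h4 hNpos.le
    have hstep : sfun j = sfun (j - 1) * r := by
      have h : j - 1 + 1 = j := by omega
      simp only [hsfundef]
      conv_lhs => rw [← h]
      rw [pow_succ]; ring
    have hmul : 2 * (y - 1) * sfun j ≤ 2 * y * S := by
      rw [hstep]
      have : 2 * (y - 1) * (sfun (j-1) * r) = 2 * y * sfun (j-1) := by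
        rw [hrdef]; field_simp
      rw [this]
      exact mul_le_mul_of_nonneg_left hlo (by positivity)
    have hsqle : Real.sqrt (2 * (y-1) * sfun j) ≤ Real.sqrt (2 * y * S) :=
      Real.sqrt_le_sqrt hmul
    show Real.sqrt (2 * (y-1) * sfun j) + (y-1)/3 ≤ |Zv|
    linarith
  -- union bound
  calc μ _ ≤ μ (⋃ j ∈ Finset.Icc 1 J, A j) := measure_mono hsub
    _ ≤ ∑ j ∈ Finset.Icc 1 J, μ (A j) := measure_biUnion_finset_le _ _
    _ ≤ ∑ j ∈ Finset.Icc 1 J, ENNReal.ofReal (2 * Real.exp (-(y-1))) :=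
        Finset.sum_le_sum fun j _ => hBernstein (y-1) hy0 (sfun j) (hsfun_pos j)
    _ = J • ENNReal.ofReal (2 * Real.exp (-(y-1))) := by
        rw [Finset.sum_const, Nat.card_Icc, Nat.add_sub_cancel]
    _ ≤ ENNReal.ofReal (2 * Real.exp 1 * (y * L + 1) * Real.exp (-y)) := by
        rw [nsmul_eq_mul, ← ENNReal.ofReal_natCast, ← ENNReal.ofReal_mul (by positivity)]
        apply ENNReal.ofReal_le_ofReal
        have hJle : (J:ℝ) ≤ y * L + 1 :=
          le_of_lt (Nat.ceil_lt_add_one (by positivity))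
        have hexp : Real.exp (-(y-1)) = Real.exp 1 * Real.exp (-y) := by
          rw [← Real.exp_add]; ring_nf
        rw [hexp]
        nlinarith [Real.exp_pos 1, Real.exp_pos (-y), mul_pos (Real.exp_pos 1) (Real.exp_pos (-y))]
end

section
/- Let ν, y > 0, N ≥ 1 and suppose μ ∈ [0,1] satisfies |ν − μ| ≤ √(2yμ(1−μ)/N) + y/(3N). If ν > y/(3N), then μ ≥ (N+2y)^{−1}[Nν + 2y/3 − √(2Nνy + y²/3 − (2y/N)(y/3 − νN)²)], and if ν < 1 − y/(3N), then μ ≤ (N+2y)^{−1}[Nν + 4y/3 + √(2Nνy + 5y²/3 − (2y/N)(y/3 + νN)²)]. -/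
set_option maxHeartbeats 1000000 in
/-- Algebraic elimination: from the variance-dependent deviation bound on |ν−μ| one
gets the explicit lower/upper confidence bounds ψ_low, ψ_high for μ. -/
theorem confidence_bound_elimination
    (ν y : ℝ) (N : ℕ) (hν : 0 < ν) (hy : 0 < y) (hN : 1 ≤ N)
    (μ : ℝ) (hμ : μ ∈ Set.Icc (0 : ℝ) 1)
    (hdev : |ν - μ| ≤ Real.sqrt (2 * y * (μ * (1 - μ)) / N) + y / (3 * N)) :
    (y / (3 * N) < ν →
      ((N : ℝ) + 2 * y)⁻¹ * ((N : ℝ) * ν + 2 * y / 3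
        - Real.sqrt (2 * N * ν * y + y ^ 2 / 3
            - (2 * y / N) * (y / 3 - ν * N) ^ 2)) ≤ μ) ∧
    (ν < 1 - y / (3 * N) →
      μ ≤ ((N : ℝ) + 2 * y)⁻¹ * ((N : ℝ) * ν + 4 * y / 3
        + Real.sqrt (2 * N * ν * y + 5 * y ^ 2 / 3
            - (2 * y / N) * (y / 3 + ν * N) ^ 2))) := by
  obtain ⟨hμ0, hμ1⟩ := hμ
  have hn : (1:ℝ) ≤ (N:ℝ) := by exact_mod_cast hN
  have hn0 : (0:ℝ) < (N:ℝ) := by linarith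
  have hNe : (N:ℝ) ≠ 0 := ne_of_gt hn0
  have hP : (0:ℝ) < (N:ℝ) + 2 * y := by linarith
  have hμμ : 0 ≤ μ * (1 - μ) := mul_nonneg hμ0 (by linarith)
  have hs0 : 0 ≤ 2 * y * (μ * (1 - μ)) / N := by positivity
  set s := Real.sqrt (2 * y * (μ * (1 - μ)) / N) with hs_def
  have hsnn : 0 ≤ s := Real.sqrt_nonneg _
  have hs2 : s ^ 2 = 2 * y * (μ * (1 - μ)) / N := Real.sq_sqrt hs0
  have hs2' : ((N:ℝ) * s) ^ 2 = 2 * N * y * (μ * (1 - μ)) := by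
    rw [mul_pow, hs2]; field_simp
  obtain ⟨hdev1, hdev2⟩ := abs_le.mp hdev
  have hy3 : (N:ℝ) * (y / (3 * N)) = y / 3 := by field_simp
  constructor
  · intro hlo
    have ht0 : 0 < (N:ℝ) * ν - y / 3 := by
      have h := mul_lt_mul_of_pos_left hlo hn0
      rw [hy3] at h; linarith
    rw [inv_mul_le_iff₀ hP]
    rcases le_or_gt (ν - y / (3 * N)) μ with hcase | hcase
    · have hNμ : (N:ℝ) * ν - y / 3 ≤ N * μ := by
        have h := mul_le_mul_of_nonneg_left hcase hn0.le
        rw [mul_sub, hy3] at h; linarith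
      have ht1 : (N:ℝ) * ν - y / 3 ≤ N := by
        nlinarith [mul_le_mul_of_nonneg_left hμ1 hn0.le]
      have hD : y ^ 2 ≤ 2 * N * ν * y + y ^ 2 / 3 - (2 * y / N) * (y / 3 - ν * N) ^ 2 := by
        have heq : 2 * (N:ℝ) * ν * y + y ^ 2 / 3 - (2 * y / N) * (y / 3 - ν * N) ^ 2
            = y ^ 2 + 2 * y * ((N:ℝ) * ν - y / 3) * ((N:ℝ) - ((N:ℝ) * ν - y / 3)) / N := by
          field_simp; ring
        rw [heq]
        have : 0 ≤ 2 * y * ((N:ℝ) * ν - y / 3) * ((N:ℝ) - ((N:ℝ) * ν - y / 3)) / N :=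
          div_nonneg (mul_nonneg (mul_nonneg (by linarith) ht0.le) (by linarith)) hn0.le
        linarith
      have hyD := Real.sqrt_le_sqrt hD
      rw [Real.sqrt_sq hy.le] at hyD
      nlinarith [mul_nonneg (by linarith : (0:ℝ) ≤ 2 * y) hμ0]
    · have hstep : (N:ℝ) * ν - y / 3 - N * μ ≤ N * s := by
        have h1 : ν - y / (3 * N) - μ ≤ s := by linarith
        have h := mul_le_mul_of_nonneg_left h1 hn0.le
        rw [mul_sub, mul_sub, hy3] at h; linarith
      have hpos : 0 ≤ (N:ℝ) * ν - y / 3 - N * μ := by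
        have h := mul_lt_mul_of_pos_left hcase hn0
        rw [mul_sub, hy3] at h; linarith
      have hsq : ((N:ℝ) * ν - y / 3 - N * μ) ^ 2 ≤ 2 * N * y * (μ * (1 - μ)) := by
        calc ((N:ℝ) * ν - y / 3 - N * μ) ^ 2 ≤ ((N:ℝ) * s) ^ 2 :=
              pow_le_pow_left₀ hpos hstep 2
          _ = 2 * N * y * (μ * (1 - μ)) := hs2'
      have hkey : (((N:ℝ) + 2 * y) * μ - ((N:ℝ) * ν + 2 * y / 3)) ^ 2
          ≤ 2 * N * ν * y + y ^ 2 / 3 - (2 * y / N) * (y / 3 - ν * N) ^ 2 := by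
        have hid : (N:ℝ) * (2 * N * ν * y + y ^ 2 / 3 - (2 * y / N) * (y / 3 - ν * N) ^ 2)
            - (N:ℝ) * ((((N:ℝ) + 2 * y) * μ - ((N:ℝ) * ν + 2 * y / 3)) ^ 2)
            = ((N:ℝ) + 2 * y) * (2 * N * y * (μ * (1 - μ)) - ((N:ℝ) * ν - y / 3 - N * μ) ^ 2) := by
          field_simp; ring
        have hrhs : 0 ≤ ((N:ℝ) + 2 * y) * (2 * N * y * (μ * (1 - μ)) - ((N:ℝ) * ν - y / 3 - N * μ) ^ 2) :=
          mul_nonneg hP.le (by linarith)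
        have h2 : (N:ℝ) * ((((N:ℝ) + 2 * y) * μ - ((N:ℝ) * ν + 2 * y / 3)) ^ 2)
            ≤ (N:ℝ) * (2 * N * ν * y + y ^ 2 / 3 - (2 * y / N) * (y / 3 - ν * N) ^ 2) := by
          linarith
        exact le_of_mul_le_mul_left h2 hn0
      have habs := Real.sqrt_le_sqrt hkey
      rw [Real.sqrt_sq_eq_abs] at habs
      have := (abs_le.mp habs).1
      linarith
  · intro hhi
    have hu0 : 0 < (N:ℝ) * ν + y / 3 := by positivity
    have hu1 : (N:ℝ) * ν + y / 3 < N := by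
      have h := mul_lt_mul_of_pos_left hhi hn0
      rw [mul_sub, mul_one, hy3] at h; linarith
    rw [le_inv_mul_iff₀ hP]
    rcases le_or_gt μ (ν + y / (3 * N)) with hcase | hcase
    · have hNμ : (N:ℝ) * μ ≤ (N:ℝ) * ν + y / 3 := by
        have h := mul_le_mul_of_nonneg_left hcase hn0.le
        rw [mul_add, hy3] at h; linarith
      have hD : y ^ 2 ≤ 2 * N * ν * y + 5 * y ^ 2 / 3 - (2 * y / N) * (y / 3 + ν * N) ^ 2 := by
        have heq : 2 * (N:ℝ) * ν * y + 5 * y ^ 2 / 3 - (2 * y / N) * (y / 3 + ν * N) ^ 2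
            = y ^ 2 + 2 * y * ((N:ℝ) * ν + y / 3) * ((N:ℝ) - ((N:ℝ) * ν + y / 3)) / N := by
          field_simp; ring
        rw [heq]
        have : 0 ≤ 2 * y * ((N:ℝ) * ν + y / 3) * ((N:ℝ) - ((N:ℝ) * ν + y / 3)) / N :=
          div_nonneg (mul_nonneg (mul_nonneg (by linarith) hu0.le) (by linarith)) hn0.le
        linarith
      have hyD := Real.sqrt_le_sqrt hD
      rw [Real.sqrt_sq hy.le] at hyD
      nlinarith [mul_le_mul_of_nonneg_left hμ1 (by linarith : (0:ℝ) ≤ 2 * y)]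
    · have hstep : (N:ℝ) * μ - ((N:ℝ) * ν + y / 3) ≤ N * s := by
        have h1 : μ - (ν + y / (3 * N)) ≤ s := by linarith
        have h := mul_le_mul_of_nonneg_left h1 hn0.le
        rw [mul_sub, mul_add, hy3] at h; linarith
      have hpos : 0 ≤ (N:ℝ) * μ - ((N:ℝ) * ν + y / 3) := by
        have h := mul_lt_mul_of_pos_left hcase hn0
        rw [mul_add, hy3] at h; linarith
      have hsq : ((N:ℝ) * μ - ((N:ℝ) * ν + y / 3)) ^ 2 ≤ 2 * N * y * (μ * (1 - μ)) := by
        calc ((N:ℝ) * μ - ((N:ℝ) * ν + y / 3)) ^ 2 ≤ ((N:ℝ) * s) ^ 2 :=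
              pow_le_pow_left₀ hpos hstep 2
          _ = 2 * N * y * (μ * (1 - μ)) := hs2'
      have hkey : (((N:ℝ) + 2 * y) * μ - ((N:ℝ) * ν + 4 * y / 3)) ^ 2
          ≤ 2 * N * ν * y + 5 * y ^ 2 / 3 - (2 * y / N) * (y / 3 + ν * N) ^ 2 := by
        have hid : (N:ℝ) * (2 * N * ν * y + 5 * y ^ 2 / 3 - (2 * y / N) * (y / 3 + ν * N) ^ 2)
            - (N:ℝ) * ((((N:ℝ) + 2 * y) * μ - ((N:ℝ) * ν + 4 * y / 3)) ^ 2)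
            = ((N:ℝ) + 2 * y) * (2 * N * y * (μ * (1 - μ)) - ((N:ℝ) * μ - ((N:ℝ) * ν + y / 3)) ^ 2) := by
          field_simp; ring
        have hrhs : 0 ≤ ((N:ℝ) + 2 * y) * (2 * N * y * (μ * (1 - μ)) - ((N:ℝ) * μ - ((N:ℝ) * ν + y / 3)) ^ 2) :=
          mul_nonneg hP.le (by linarith)
        have h2 : (N:ℝ) * ((((N:ℝ) + 2 * y) * μ - ((N:ℝ) * ν + 4 * y / 3)) ^ 2)
            ≤ (N:ℝ) * (2 * N * ν * y + 5 * y ^ 2 / 3 - (2 * y / N) * (y / 3 + ν * N) ^ 2) := by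
          linarith
        exact le_of_mul_le_mul_left h2 hn0
      have habs := Real.sqrt_le_sqrt hkey
      rw [Real.sqrt_sq_eq_abs] at habs
      have := (abs_le.mp habs).2
      linarith
end
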